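/- Stubborn Complex Roots Theorem (general form): let P and Q be real polynomials of degrees n and m respectively with n > m. Suppose all m roots of Q are real and positive; P has at least m real roots, and each non-real root p_k of P satisfies |Re(p_k)| > |Im(p_k)|. Suppose |P(0)| > |Q(0)|. Let |p₁| ≤ ... ≤ |p_m| be the m smallest (in absolute value) real roots of P and |q₁| ≤ ... ≤ |q_m| the roots of Q, ordered by absolute value, and suppose |p_j| < |q_j| for every j = 1, ..., m. Then the number of roots (with multiplicity) of S = P + Q with strictly negative (respectively strictly positive) real part equals the number of roots of P with strictly negative (respectively strictly positive) real part. -/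

import Mathlib

open Polynomial
open Complex Filter Topology

noncomputable section

def Complex.abs : AbsoluteValue ℂ ℝ := IsAbsoluteValue.toAbsoluteValue (norm : ℂ → ℝ)

lemma Complex.abs_ofReal (r : ℝ) : Complex.abs (r : ℂ) = |r| :=
  show ‖(r : ℂ)‖ = |r| by simp

lemma Complex.abs_conj (z : ℂ) : Complex.abs ((starRingEnd ℂ) z) = Complex.abs z :=
  show ‖(starRingEnd ℂ) z‖ = ‖z‖ by simp

lemma Complex.sq_abs (z : ℂ) : Complex.abs z ^ 2 = Complex.normSq z :=
  show ‖z‖ ^ 2 = Complex.normSq z from Complex.sq_norm z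

lemma conj_eval (R : Polynomial ℝ) (z : ℂ) :
    (R.map (algebraMap ℝ ℂ)).eval ((starRingEnd ℂ) z)
      = (starRingEnd ℂ) ((R.map (algebraMap ℝ ℂ)).eval z) := by
  simpa [Polynomial.aeval_def, Polynomial.eval_map] using Polynomial.aeval_conj R z

lemma abs_sq_eval_mul_I (R : Polynomial ℝ) (t : ℝ) :
    Complex.abs ((R.map (algebraMap ℝ ℂ)).eval ((t : ℂ) * I)) ^ 2
      = Complex.abs ((R.map (algebraMap ℝ ℂ)).leadingCoeff) ^ 2 *
        (((R.map (algebraMap ℝ ℂ)).roots.map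
          (fun z => Complex.abs (z ^ 2 + (t : ℂ) ^ 2))).prod) := by
  set Rc := R.map (algebraMap ℝ ℂ) with hRc
  have hsp : Rc = C Rc.leadingCoeff * (Rc.roots.map fun a => X - C a).prod :=
    (IsAlgClosed.splits _).eq_prod_roots
  have key : (Rc.eval ((t:ℂ)*I)) * (Rc.eval (-((t:ℂ)*I)))
      = Rc.leadingCoeff ^ 2 * ((Rc.roots).map (fun z => z ^ 2 + (t:ℂ) ^ 2)).prod := by
    conv_lhs => rw [hsp]
    simp only [eval_mul, eval_C, eval_multiset_prod, Multiset.map_map, Function.comp,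
      eval_sub, eval_X, eval_C]
    rw [mul_mul_mul_comm, ← Multiset.prod_map_mul, sq]
    congr 1
    refine congrArg Multiset.prod (Multiset.map_congr rfl ?_)
    intro z _
    have : ((t:ℂ)*I - z) * (-((t:ℂ)*I) - z) = z^2 + (t:ℂ)^2 := by
      have hI : (I:ℂ)^2 = -1 := Complex.I_sq
      ring_nf
      rw [hI]; ring
    exact this
  have habs : Complex.abs (Rc.eval (-((t:ℂ)*I))) = Complex.abs (Rc.eval ((t:ℂ)*I)) := by
    have : -((t:ℂ)*I) = (starRingEnd ℂ) ((t:ℂ)*I) := by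
      simp [Complex.conj_ofReal]
    rw [this, conj_eval]
    exact Complex.abs_conj _
  calc Complex.abs (Rc.eval ((t:ℂ)*I)) ^ 2
      = Complex.abs (Rc.eval ((t:ℂ)*I)) * Complex.abs (Rc.eval (-((t:ℂ)*I))) := by
        rw [habs, sq]
    _ = Complex.abs ((Rc.eval ((t:ℂ)*I)) * (Rc.eval (-((t:ℂ)*I)))) := (map_mul Complex.abs _ _).symm
    _ = Complex.abs (Rc.leadingCoeff ^ 2 * ((Rc.roots).map (fun z => z ^ 2 + (t:ℂ) ^ 2)).prod) := by rw [key]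
    _ = Complex.abs (Rc.leadingCoeff) ^ 2 *
        ((Rc.roots).map (fun z => Complex.abs (z ^ 2 + (t:ℂ) ^ 2))).prod := by
        rw [map_mul, map_pow, map_multiset_prod, Multiset.map_map]
        rfl

lemma abs_sq_le_abs_sq_add (z : ℂ) (t : ℝ) (h : |z.im| ≤ |z.re|) :
    Complex.abs z ^ 2 ≤ Complex.abs (z ^ 2 + (t : ℂ) ^ 2) := by
  have him : z.im ^ 2 ≤ z.re ^ 2 := by
    have := pow_le_pow_left₀ (abs_nonneg z.im) h 2
    simpa [sq_abs] using this
  have h1 : (Complex.abs (z ^ 2 + (t : ℂ) ^ 2)) ^ 2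
      = (z.re ^ 2 - z.im ^ 2 + t ^ 2) ^ 2 + (2 * z.re * z.im) ^ 2 := by
    rw [Complex.sq_abs, Complex.normSq_apply]
    simp [pow_two, Complex.mul_re, Complex.mul_im, Complex.add_re, Complex.add_im]
    ring
  have h2 : Complex.abs z ^ 2 = z.re ^ 2 + z.im ^ 2 := by
    rw [Complex.sq_abs, Complex.normSq_apply]; ring
  have hA : 0 ≤ Complex.abs (z ^ 2 + (t : ℂ) ^ 2) := apply_nonneg _ _
  nlinarith [sq_nonneg t, sq_nonneg (t * t), sq_nonneg (z.re * z.im),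
    sq_nonneg (Complex.abs (z ^ 2 + (t : ℂ) ^ 2) + z.re ^ 2 + z.im ^ 2)]

lemma multiset_prod_map_le {s : Multiset ℂ} {f g : ℂ → ℝ}
    (h : ∀ z ∈ s, 0 ≤ f z ∧ f z ≤ g z) : (s.map f).prod ≤ (s.map g).prod := by
  induction s using Multiset.induction_on with
  | empty => simp
  | cons a s ih =>
    simp only [Multiset.map_cons, Multiset.prod_cons]
    have ha := h a (Multiset.mem_cons_self a s)
    have hs : ∀ z ∈ s, 0 ≤ f z ∧ f z ≤ g z := fun z hz => h z (Multiset.mem_cons_of_mem hz)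
    have h1 : 0 ≤ (s.map f).prod :=
      Multiset.prod_nonneg (by
        intro x hx
        obtain ⟨z, hz, rfl⟩ := Multiset.mem_map.mp hx
        exact (hs z hz).1)
    have h2 : (s.map f).prod ≤ (s.map g).prod := ih hs
    have hga : 0 ≤ g a := le_trans ha.1 ha.2
    nlinarith [ha.1, ha.2]

lemma ofFn_castLE_take {α : Type*} {m k : ℕ} (h : m ≤ k) (f : Fin k → α) :
    List.ofFn (fun j : Fin m => f (Fin.castLE h j)) = (List.ofFn f).take m := by
  apply List.ext_getElem
  · simp [Nat.min_eq_left h]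
  · intro i h1 h2
    simp [List.getElem_ofFn, List.getElem_take]

lemma ofFn_castLE_le {α : Type*} {m k : ℕ} (h : m ≤ k) (f : Fin k → α) :
    (↑(List.ofFn (fun j : Fin m => f (Fin.castLE h j))) : Multiset α) ≤ ↑(List.ofFn f) := by
  rw [ofFn_castLE_take h f]
  exact (List.take_sublist m (List.ofFn f)).subperm

set_option maxHeartbeats 1000000 in
lemma key_ineq (m k : ℕ) (P Q : Polynomial ℝ)
    (hP0 : P ≠ 0) (hQ0 : Q ≠ 0)
    (hQsplit : (Q.map (RingHom.id ℝ)).Splits)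
    (hmk : m ≤ k)
    (p : Fin k → ℝ) (q : Fin m → ℝ)
    (hproots : P.roots = ↑(List.ofFn p)) (hqroots : Q.roots = ↑(List.ofFn q))
    (hqpos : ∀ j, 0 < q j)
    (hcomplex : ∀ z : ℂ, (P.map (algebraMap ℝ ℂ)).eval z = 0 → z.im ≠ 0 →
      |z.im| < |z.re|)
    (h0 : |Q.eval 0| < |P.eval 0|)
    (hlt : ∀ j : Fin m, |p (Fin.castLE hmk j)| < |q j|) :
    ∀ t : ℝ, Complex.abs ((Q.map (algebraMap ℝ ℂ)).eval ((t : ℂ) * I))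
      < Complex.abs ((P.map (algebraMap ℝ ℂ)).eval ((t : ℂ) * I)) := by
  intro t
  set Pc := P.map (algebraMap ℝ ℂ) with hPc
  set Qc := Q.map (algebraMap ℝ ℂ) with hQc
  set aP := Complex.abs Pc.leadingCoeff with haP
  set aQ := Complex.abs Qc.leadingCoeff with haQ
  set pj : Fin m → ℝ := fun j => p (Fin.castLE hmk j) with hpj
  -- eval at 0 identities
  have hevalP0 : Pc.eval 0 = ((P.eval 0 : ℝ) : ℂ) := by
    rw [← coeff_zero_eq_eval_zero, ← coeff_zero_eq_eval_zero, coeff_map]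
    rfl
  have hevalQ0 : Qc.eval 0 = ((Q.eval 0 : ℝ) : ℂ) := by
    rw [← coeff_zero_eq_eval_zero, ← coeff_zero_eq_eval_zero, coeff_map]
    rfl
  -- Q-side formula
  have hQroots : Qc.roots = ↑(List.ofFn (fun j => ((q j : ℝ) : ℂ))) := by
    rw [hQc, (by simpa using hQsplit : Q.Splits).roots_map (algebraMap ℝ ℂ), hqroots]
    simp [Multiset.map_coe, List.map_ofFn]
    rfl
  have hQside : ∀ u : ℝ, Complex.abs (Qc.eval ((u : ℂ) * I)) ^ 2
      = aQ ^ 2 * ∏ j, (q j ^ 2 + u ^ 2) := by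
    intro u
    rw [hQc, abs_sq_eval_mul_I Q u, ← hQc, hQroots, ← haQ]
    congr 1
    rw [Multiset.map_coe, List.map_ofFn, Multiset.prod_coe, List.prod_ofFn]
    apply Finset.prod_congr rfl
    intro j _
    have : ((q j : ℝ) : ℂ) ^ 2 + (u : ℂ) ^ 2 = ((q j ^ 2 + u ^ 2 : ℝ) : ℂ) := by push_cast; ring
    rw [Function.comp_apply, this, Complex.abs_ofReal, _root_.abs_of_nonneg (by positivity)]
  -- P-side formula
  have hPside : ∀ u : ℝ, Complex.abs (Pc.eval ((u : ℂ) * I)) ^ 2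
      = aP ^ 2 * ((Pc.roots.map (fun z => Complex.abs (z ^ 2 + (u : ℂ) ^ 2))).prod) := by
    intro u
    rw [hPc, abs_sq_eval_mul_I P u]
  -- values at zero
  have hQ0' : |Q.eval 0| ^ 2 = aQ ^ 2 * ∏ j, q j ^ 2 := by
    have := hQside 0
    simp only [Complex.ofReal_zero, zero_mul, hevalQ0, Complex.abs_ofReal] at this
    simpa using this
  have hP0' : |P.eval 0| ^ 2
      = aP ^ 2 * ((Pc.roots.map (fun z => Complex.abs z ^ 2)).prod) := by
    have := hPside 0
    simp only [Complex.ofReal_zero, zero_mul, hevalP0, Complex.abs_ofReal] at this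
    rw [this]
    congr 1
    refine congrArg Multiset.prod (Multiset.map_congr rfl ?_)
    intro z _
    simp [map_pow]
  -- root decomposition
  have hmaple : (P.roots.map (algebraMap ℝ ℂ) : Multiset ℂ) ≤ Pc.roots :=
    map_roots_le (by rw [← hPc]; exact (Polynomial.map_ne_zero_iff (algebraMap ℝ ℂ).injective).mpr hP0)
  have hofn : P.roots.map (algebraMap ℝ ℂ) = ↑(List.ofFn (fun i => ((p i : ℝ) : ℂ))) := by
    rw [hproots, Multiset.map_coe, List.map_ofFn]
    rfl
  have hle : (↑(List.ofFn (fun j : Fin m => ((pj j : ℝ) : ℂ))) : Multiset ℂ) ≤ Pc.roots := by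
    refine le_trans ?_ hmaple
    rw [hofn]
    exact ofFn_castLE_le hmk _
  obtain ⟨r, hr⟩ := Multiset.le_iff_exists_add.mp hle
  -- every root of Pc satisfies |im| ≤ |re|
  have hroots_im : ∀ z ∈ Pc.roots, |z.im| ≤ |z.re| := by
    intro z hz
    have hev : Pc.eval z = 0 := (Polynomial.mem_roots'.mp hz).2
    by_cases him : z.im = 0
    · rw [him, abs_zero]; exact abs_nonneg _
    · exact (hcomplex z hev him).le
  -- products over the matched list
  have hl0g : ∀ u : ℝ,
      ((Multiset.map (fun z => Complex.abs (z ^ 2 + (u : ℂ) ^ 2))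
        (↑(List.ofFn (fun j : Fin m => ((pj j : ℝ) : ℂ))) : Multiset ℂ)).prod)
        = ∏ j, (pj j ^ 2 + u ^ 2) := by
    intro u
    rw [Multiset.map_coe, List.map_ofFn, Multiset.prod_coe, List.prod_ofFn]
    apply Finset.prod_congr rfl
    intro j _
    have hc : ((pj j : ℝ) : ℂ) ^ 2 + (u : ℂ) ^ 2 = ((pj j ^ 2 + u ^ 2 : ℝ) : ℂ) := by
      push_cast; ring
    rw [Function.comp_apply, hc, Complex.abs_ofReal, _root_.abs_of_nonneg (by positivity)]
  have hl0a :
      ((Multiset.map (fun z => Complex.abs z ^ 2)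
        (↑(List.ofFn (fun j : Fin m => ((pj j : ℝ) : ℂ))) : Multiset ℂ)).prod)
        = ∏ j, pj j ^ 2 := by
    rw [Multiset.map_coe, List.map_ofFn, Multiset.prod_coe, List.prod_ofFn]
    apply Finset.prod_congr rfl
    intro j _
    rw [Function.comp_apply, Complex.abs_ofReal, _root_.sq_abs]
  set Prt := (r.map (fun z => Complex.abs (z ^ 2 + (t : ℂ) ^ 2))).prod with hPrt_def
  set Pra := (r.map (fun z => Complex.abs z ^ 2)).prod with hPra_def
  set Sq := ∏ j, q j ^ 2 with hSq_def
  set Tq := ∏ j, (q j ^ 2 + t ^ 2) with hTq_def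
  set Tp := ∏ j, (pj j ^ 2 + t ^ 2) with hTp_def
  set Sp := ∏ j, pj j ^ 2 with hSp_def
  have hY2 : Complex.abs (Pc.eval ((t : ℂ) * I)) ^ 2 = aP ^ 2 * (Tp * Prt) := by
    rw [hPside t, hr, Multiset.map_add, Multiset.prod_add, hl0g t]
  have hA0 : |P.eval 0| ^ 2 = aP ^ 2 * (Sp * Pra) := by
    rw [hP0', hr, Multiset.map_add, Multiset.prod_add, hl0a]
  have hX2 : Complex.abs (Qc.eval ((t : ℂ) * I)) ^ 2 = aQ ^ 2 * Tq := hQside t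
  -- inequality (i)
  have hi : Pra ≤ Prt := by
    apply multiset_prod_map_le
    intro z hz
    have hzroot : z ∈ Pc.roots := by rw [hr]; exact Multiset.mem_add.mpr (Or.inr hz)
    exact ⟨by positivity, abs_sq_le_abs_sq_add z t (hroots_im z hzroot)⟩
  -- inequality (ii)
  have hpq : ∀ j, pj j ^ 2 < q j ^ 2 := by
    intro j
    have h1 := hlt j
    nlinarith [abs_nonneg (pj j), abs_nonneg (q j), _root_.sq_abs (pj j), _root_.sq_abs (q j)]
  have hii : Tq * Sp ≤ Tp * Sq := by
    rw [hTq_def, hSp_def, hTp_def, hSq_def, ← Finset.prod_mul_distrib,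
      ← Finset.prod_mul_distrib]
    apply Finset.prod_le_prod
    · intro j _; positivity
    · intro j _
      have := (hpq j).le
      nlinarith [sq_nonneg t, sq_nonneg (pj j), sq_nonneg (q j)]
  -- positivity facts
  have haP2 : (0:ℝ) ≤ aP ^ 2 := sq_nonneg _
  have hPra : 0 ≤ Pra := by
    apply Multiset.prod_nonneg
    intro x hx
    obtain ⟨z, _, rfl⟩ := Multiset.mem_map.mp hx
    positivity
  have hSqpos : 0 < Sq := by
    apply Finset.prod_pos; intro j _; exact pow_pos (hqpos j) 2
  have hTqpos : 0 < Tq := by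
    apply Finset.prod_pos; intro j _
    have := hqpos j; nlinarith [sq_nonneg t]
  have hTp : 0 ≤ Tp := by
    apply Finset.prod_nonneg; intro j _; exact add_nonneg (sq_nonneg _) (sq_nonneg _)
  have h0sq : aQ ^ 2 * Sq < aP ^ 2 * (Sp * Pra) := by
    rw [← hQ0', ← hA0]
    have := pow_lt_pow_left₀ h0 (abs_nonneg _) two_ne_zero
    exact this
  have hchain : Complex.abs (Qc.eval ((t : ℂ) * I)) ^ 2 * Sq
      < Complex.abs (Pc.eval ((t : ℂ) * I)) ^ 2 * Sq := by
    calc Complex.abs (Qc.eval ((t : ℂ) * I)) ^ 2 * Sq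
        = Tq * (aQ ^ 2 * Sq) := by rw [hX2]; ring
      _ < Tq * (aP ^ 2 * (Sp * Pra)) := by exact mul_lt_mul_of_pos_left h0sq hTqpos
      _ = (Tq * Sp) * (aP ^ 2 * Pra) := by ring
      _ ≤ (Tp * Sq) * (aP ^ 2 * Pra) := by
          apply mul_le_mul_of_nonneg_right hii (by positivity)
      _ = (aP ^ 2 * (Tp * Pra)) * Sq := by ring
      _ ≤ (aP ^ 2 * (Tp * Prt)) * Sq := by
          apply mul_le_mul_of_nonneg_right _ hSqpos.le
          apply mul_le_mul_of_nonneg_left _ haP2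
          exact mul_le_mul_of_nonneg_left hi hTp
      _ = Complex.abs (Pc.eval ((t : ℂ) * I)) ^ 2 * Sq := by rw [hY2]
  have hsq : Complex.abs (Qc.eval ((t : ℂ) * I)) ^ 2
      < Complex.abs (Pc.eval ((t : ℂ) * I)) ^ 2 :=
    lt_of_mul_lt_mul_right hchain hSqpos.le
  exact lt_of_pow_lt_pow_left₀ 2 (apply_nonneg _ _) hsq

lemma root_bound (f : Polynomial ℂ) (hf : f ≠ 0) (z : ℂ) (hz : f.eval z = 0) :
    Complex.abs z ≤ max 1 ((∑ i ∈ Finset.range f.natDegree, Complex.abs (f.coeff i)) /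
      Complex.abs f.leadingCoeff) := by
  rcases le_or_gt (Complex.abs z) 1 with h1 | h1
  · exact le_max_of_le_left h1
  have hn : 0 < f.natDegree := by
    rcases Nat.eq_zero_or_pos f.natDegree with h | h
    · exfalso
      have := Polynomial.eq_C_of_natDegree_eq_zero h
      rw [this] at hz hf
      simp at hz
      simp [hz] at hf
    · exact h
  set n := f.natDegree with hn_def
  have hsum : ∑ i ∈ Finset.range (n + 1), f.coeff i * z ^ i = 0 := by
    rw [← Polynomial.eval_eq_sum_range]; exact hz
  have hlead : f.leadingCoeff * z ^ n = -∑ i ∈ Finset.range n, f.coeff i * z ^ i := by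
    have := Finset.sum_range_succ (fun i => f.coeff i * z ^ i) n
    rw [this] at hsum
    have : f.coeff n * z ^ n = -∑ i ∈ Finset.range n, f.coeff i * z ^ i := by
      linear_combination hsum
    rwa [Polynomial.leadingCoeff]
  have hlc : 0 < Complex.abs f.leadingCoeff := by
    rw [AbsoluteValue.pos_iff]
    exact Polynomial.leadingCoeff_ne_zero.mpr hf
  set S := ∑ i ∈ Finset.range n, Complex.abs (f.coeff i) with hS_def
  have habs : Complex.abs f.leadingCoeff * Complex.abs z ^ n ≤ S * Complex.abs z ^ (n - 1) := by
    have h2 : Complex.abs (f.leadingCoeff * z ^ n)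
        = Complex.abs f.leadingCoeff * Complex.abs z ^ n := by
      rw [map_mul, map_pow]
    rw [← h2, hlead, map_neg_eq_map]
    calc Complex.abs (∑ i ∈ Finset.range n, f.coeff i * z ^ i)
        ≤ ∑ i ∈ Finset.range n, Complex.abs (f.coeff i * z ^ i) :=
          Complex.abs.sum_le _ _
      _ ≤ ∑ i ∈ Finset.range n, Complex.abs (f.coeff i) * Complex.abs z ^ (n - 1) := by
          apply Finset.sum_le_sum
          intro i hi
          rw [map_mul, map_pow]
          apply mul_le_mul_of_nonneg_left _ (apply_nonneg _ _)
          apply pow_le_pow_right₀ h1.le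
          have := Finset.mem_range.mp hi
          omega
      _ = S * Complex.abs z ^ (n - 1) := by rw [← Finset.sum_mul]
  have hzpow : 0 < Complex.abs z ^ (n - 1) := by positivity
  have hkey : Complex.abs f.leadingCoeff * Complex.abs z ≤ S := by
    have hns : n = (n - 1) + 1 := by omega
    have h3 : Complex.abs z ^ n = Complex.abs z ^ (n - 1) * Complex.abs z := by
      conv_lhs => rw [hns]
      rw [pow_succ]
    rw [h3] at habs
    have := (mul_le_mul_iff_of_pos_right hzpow).mp (by linear_combination habs :
      (Complex.abs f.leadingCoeff * Complex.abs z) * Complex.abs z ^ (n-1) ≤ S * Complex.abs z ^ (n-1))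
    exact this
  refine le_max_of_le_right ?_
  rw [le_div_iff₀ hlc]
  linarith [hkey]

lemma ofFn_get_cast {α : Type*} {l : List α} {n : ℕ} (h : l.length = n) :
    List.ofFn (fun j : Fin n => l.get (Fin.cast h.symm j)) = l := by
  apply List.ext_getElem
  · simp [h]
  · intro i h1 h2
    simp

lemma card_filter_ofFn {n : ℕ} (f : Fin n → ℂ) (pr : ℂ → Prop) [DecidablePred pr] :
    Multiset.card (Multiset.filter pr ↑(List.ofFn f))
      = (Finset.univ.filter fun j => pr (f j)).card := by
  rw [List.ofFn_eq_map]
  rw [← Multiset.map_coe]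
  rw [Multiset.filter_map]
  rw [Multiset.card_map]
  rfl

set_option maxHeartbeats 2000000 in
lemma count_const (n : ℕ) (hn : 0 < n) (Pc Qc : Polynomial ℂ)
    (hPdeg : Pc.natDegree = n) (hQdeg : Qc.natDegree < n)
    (hax : ∀ s : ℝ, s ∈ Set.Icc (0:ℝ) 1 → ∀ z : ℂ,
      (Pc + C (s:ℂ) * Qc).eval z = 0 → z.re ≠ 0) :
    Multiset.card (((Pc + Qc).roots).filter fun z => z.re < 0)
      = Multiset.card ((Pc.roots).filter fun z => z.re < 0) := by
  have hPc0 : Pc ≠ 0 := fun h => by simp [h] at hPdeg; omega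
  set F : ℝ → Polynomial ℂ := fun s => Pc + C (s:ℂ) * Qc with hF_def
  -- degrees
  have hdegF : ∀ s : ℝ, (F s).degree = Pc.degree := by
    intro s
    have h1 : (C (s:ℂ) * Qc).degree < Pc.degree := by
      calc (C (s:ℂ) * Qc).degree ≤ (C (s:ℂ)).degree + Qc.degree := degree_mul_le _ _
        _ ≤ 0 + Qc.degree := add_le_add_left (degree_C_le) _
        _ = Qc.degree := zero_add _
        _ ≤ (Qc.natDegree : WithBot ℕ) := degree_le_natDegree
        _ < (n : WithBot ℕ) := Nat.cast_lt.mpr hQdeg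
        _ = Pc.degree := by rw [degree_eq_natDegree hPc0, hPdeg]
    exact degree_add_eq_left_of_degree_lt h1
  have hF0 : ∀ s : ℝ, F s ≠ 0 := by
    intro s h
    have := hdegF s
    rw [h, degree_zero, degree_eq_natDegree hPc0, hPdeg] at this
    exact (by simp : ¬ (⊥ : WithBot ℕ) = (n:WithBot ℕ)) this
  have hdegFn : ∀ s : ℝ, (F s).natDegree = n := by
    intro s
    rw [← hPdeg]
    exact natDegree_eq_of_degree_eq (hdegF s)
  have hlcF : ∀ s : ℝ, (F s).leadingCoeff = Pc.leadingCoeff := by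
    intro s
    rw [leadingCoeff, leadingCoeff, hdegFn s, hPdeg, hF_def]
    simp only [coeff_add, coeff_C_mul]
    rw [coeff_eq_zero_of_natDegree_lt hQdeg]
    ring
  have hcard : ∀ s : ℝ, Multiset.card (F s).roots = n := by
    intro s
    rw [← hdegFn s]
    exact (splits_iff_card_roots.mp (IsAlgClosed.splits _))
  -- uniform root bound
  set BD : ℝ := max 1 ((∑ i ∈ Finset.range n,
      (Complex.abs (Pc.coeff i) + Complex.abs (Qc.coeff i))) / Complex.abs Pc.leadingCoeff)
    with hBD_def
  have hlcpos : 0 < Complex.abs Pc.leadingCoeff := by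
    rw [AbsoluteValue.pos_iff]
    exact leadingCoeff_ne_zero.mpr hPc0
  have hbound : ∀ s : ℝ, s ∈ Set.Icc (0:ℝ) 1 → ∀ z ∈ (F s).roots, Complex.abs z ≤ BD := by
    intro s hs z hz
    have hzev : (F s).eval z = 0 := (mem_roots'.mp hz).2
    have hb := root_bound (F s) (hF0 s) z hzev
    rw [hdegFn s, hlcF s] at hb
    refine le_trans hb (max_le_max le_rfl ?_)
    gcongr with i hi
    calc Complex.abs ((F s).coeff i)
        = Complex.abs (Pc.coeff i + (s:ℂ) * Qc.coeff i) := by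
          rw [hF_def]; simp [coeff_add, coeff_C_mul]
      _ ≤ Complex.abs (Pc.coeff i) + Complex.abs ((s:ℂ) * Qc.coeff i) :=
          Complex.abs.add_le _ _
      _ ≤ Complex.abs (Pc.coeff i) + Complex.abs (Qc.coeff i) := by
          rw [map_mul, Complex.abs_ofReal]
          have h1 : |s| ≤ 1 := by
            rw [abs_le]; exact ⟨by linarith [hs.1], hs.2⟩
          nlinarith [apply_nonneg Complex.abs (Qc.coeff i), abs_nonneg s]
  classical
  -- counting function
  set N : ℝ → ℕ := fun s => Multiset.card ((F s).roots.filter fun z => z.re < 0) with hN_def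
  -- core compactness statement
  have core : ∀ (s : ℕ → ℝ), (∀ i, s i ∈ Set.Icc (0:ℝ) 1) → ∀ s₀ ∈ Set.Icc (0:ℝ) 1,
      Tendsto s atTop (nhds s₀) →
      ∃ φ : ℕ → ℕ, StrictMono φ ∧ ∀ᶠ i in atTop, N (s (φ i)) = N s₀ := by
    intro s hsmem s₀ hs₀ hst
    set l : ℕ → List ℂ := fun i => ((F (s i)).roots).toList with hl_def
    have hlen : ∀ i, (l i).length = n := by
      intro i
      rw [hl_def]
      rw [Multiset.length_toList]
      exact hcard (s i)
    set z : ℕ → (Fin n → ℂ) := fun i j => (l i).get (Fin.cast (hlen i).symm j) with hz_def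
    have hofn : ∀ i, (↑(List.ofFn (z i)) : Multiset ℂ) = (F (s i)).roots := by
      intro i
      rw [hz_def, ofFn_get_cast (hlen i), hl_def]
      exact Multiset.coe_toList _
    set K : Set (Fin n → ℂ) := Set.pi Set.univ (fun _ : Fin n => Metric.closedBall (0:ℂ) BD)
      with hK_def
    have hzK : ∀ i, z i ∈ K := by
      intro i
      rw [hK_def, Set.mem_pi]
      intro j _
      rw [Metric.mem_closedBall, Complex.dist_eq, sub_zero]
      apply hbound (s i) (hsmem i)
      rw [← hofn i]
      apply Multiset.mem_coe.mpr
      exact List.mem_ofFn.mpr ⟨j, rfl⟩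
    have hKcomp : IsCompact K := isCompact_univ_pi fun _ => isCompact_closedBall _ _
    obtain ⟨w, hwK, φ, hφ, hwt⟩ := hKcomp.tendsto_subseq hzK
    -- limit identity
    have hFeq : F s₀ = C Pc.leadingCoeff *
        (Multiset.map (fun a => X - C a) (↑(List.ofFn w) : Multiset ℂ)).prod := by
      apply Polynomial.funext
      intro x
      have hsφ : Tendsto (fun i => s (φ i)) atTop (nhds s₀) := hst.comp hφ.tendsto_atTop
      have htend1 : Tendsto (fun i => (F (s (φ i))).eval x) atTop (nhds ((F s₀).eval x)) := by
        have hc : Tendsto (fun i => ((s (φ i) : ℝ) : ℂ)) atTop (nhds ((s₀ : ℝ) : ℂ)) :=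
          (Complex.continuous_ofReal.tendsto _).comp hsφ
        simp only [hF_def, eval_add, eval_mul, eval_C]
        exact tendsto_const_nhds.add (hc.mul tendsto_const_nhds)
      have heval : ∀ i, (F (s (φ i))).eval x = Pc.leadingCoeff * ∏ j, (x - z (φ i) j) := by
        intro i
        conv_lhs => rw [(IsAlgClosed.splits (F (s (φ i)))).eq_prod_roots]
        rw [hlcF, eval_mul, eval_C, ← hofn (φ i)]
        simp only [eval_multiset_prod, Multiset.map_coe, List.map_ofFn,
          Multiset.prod_coe, List.prod_ofFn]
        congr 1
        rw [eval_prod]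
        apply Finset.prod_congr rfl
        intro j _
        simp [Function.comp]
      have hevalw : (C Pc.leadingCoeff *
          (Multiset.map (fun a => X - C a) (↑(List.ofFn w) : Multiset ℂ)).prod).eval x
          = Pc.leadingCoeff * ∏ j, (x - w j) := by
        rw [eval_mul, eval_C]
        simp only [eval_multiset_prod, Multiset.map_coe, List.map_ofFn,
          Multiset.prod_coe, List.prod_ofFn]
        congr 1
        rw [eval_prod]
        apply Finset.prod_congr rfl
        intro j _
        simp [Function.comp]
      have htend2 : Tendsto (fun i => (F (s (φ i))).eval x) atTop
          (nhds ((C Pc.leadingCoeff *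
            (Multiset.map (fun a => X - C a) (↑(List.ofFn w) : Multiset ℂ)).prod).eval x)) := by
        rw [hevalw]
        simp only [heval]
        apply Tendsto.const_mul
        apply tendsto_finset_prod
        intro j _
        exact Tendsto.const_sub _ ((tendsto_pi_nhds.mp hwt j))
      exact tendsto_nhds_unique htend1 htend2
    have hroots₀ : (F s₀).roots = ↑(List.ofFn w) := by
      rw [hFeq, roots_C_mul _ (leadingCoeff_ne_zero.mpr hPc0), roots_multiset_prod_X_sub_C]
    have hwre : ∀ j, (w j).re ≠ 0 := by
      intro j
      apply hax s₀ hs₀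
      have hmem : w j ∈ (F s₀).roots := by
        rw [hroots₀]
        exact Multiset.mem_coe.mpr (List.mem_ofFn.mpr ⟨j, rfl⟩)
      exact (mem_roots'.mp hmem).2
    have hsign : ∀ᶠ i in atTop, ∀ j, ((z (φ i) j).re < 0 ↔ (w j).re < 0) := by
      rw [eventually_all]
      intro j
      have hretend : Tendsto (fun i => (z (φ i) j).re) atTop (nhds ((w j).re)) :=
        (Complex.continuous_re.tendsto _).comp (tendsto_pi_nhds.mp hwt j)
      rcases lt_or_gt_of_ne (hwre j) with h | h
      · filter_upwards [hretend.eventually_lt_const h] with i hi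
        simp [hi, h]
      · filter_upwards [hretend.eventually_const_lt h] with i hi
        simp [not_lt.mpr hi.le, not_lt.mpr h.le]
    refine ⟨φ, hφ, ?_⟩
    filter_upwards [hsign] with i hi
    have h1 : N (s (φ i)) = (Finset.univ.filter fun j => (z (φ i) j).re < 0).card := by
      rw [hN_def]
      simp only
      rw [← hofn (φ i), card_filter_ofFn]
    have h2 : N s₀ = (Finset.univ.filter fun j => (w j).re < 0).card := by
      rw [hN_def]
      simp only
      rw [hroots₀, card_filter_ofFn]
    rw [h1, h2]
    congr 1
    apply Finset.filter_congr
    intro j _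
    simp only [hi j]
  -- local constancy on Icc
  have locc : ∀ s₀ ∈ Set.Icc (0:ℝ) 1, ∀ᶠ x in nhdsWithin s₀ (Set.Icc (0:ℝ) 1),
      N x = N s₀ := by
    intro s₀ hs₀
    by_contra hcon
    rw [Filter.not_eventually] at hcon
    obtain ⟨x, hx_t, hx_ne⟩ := Filter.exists_seq_forall_of_frequently hcon
    rw [tendsto_nhdsWithin_iff] at hx_t
    obtain ⟨i₀, hi₀⟩ := (hx_t.2).exists_forall_of_atTop
    set x' : ℕ → ℝ := fun i => x (i + i₀) with hx'_def
    have hx'mem : ∀ i, x' i ∈ Set.Icc (0:ℝ) 1 := fun i => hi₀ _ (Nat.le_add_left _ _)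
    have hx't : Tendsto x' atTop (nhds s₀) :=
      (hx_t.1).comp (tendsto_add_atTop_nat i₀)
    obtain ⟨φ, hφ, hev⟩ := core x' hx'mem s₀ hs₀ hx't
    obtain ⟨i, hi⟩ := hev.exists
    exact hx_ne _ hi
  -- constancy via locally constant function on the subtype
  have hconst : N 1 = N 0 := by
    haveI : PreconnectedSpace (Set.Icc (0:ℝ) 1) :=
      Subtype.preconnectedSpace isPreconnected_Icc
    have hlc : IsLocallyConstant (fun u : Set.Icc (0:ℝ) 1 => N ↑u) := by
      rw [IsLocallyConstant.iff_eventually_eq]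
      intro u
      have ht : Tendsto (Subtype.val : Set.Icc (0:ℝ) 1 → ℝ) (nhds u)
          (nhdsWithin ↑u (Set.Icc (0:ℝ) 1)) := by
        rw [tendsto_nhdsWithin_iff]
        exact ⟨continuous_subtype_val.tendsto u, Eventually.of_forall fun v => v.2⟩
      exact ht.eventually (locc ↑u u.2)
    exact hlc.apply_eq_of_preconnectedSpace ⟨1, by norm_num⟩ ⟨0, by norm_num⟩
  have hF1 : F 1 = Pc + Qc := by
    rw [hF_def]
    simp
  have hF0' : F 0 = Pc := by
    rw [hF_def]
    simp
  calc Multiset.card (((Pc + Qc).roots).filter fun z => z.re < 0)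
      = N 1 := by rw [hN_def]; simp only; rw [hF1]
    _ = N 0 := hconst
    _ = Multiset.card ((Pc.roots).filter fun z => z.re < 0) := by
        rw [hN_def]; simp only; rw [hF0']

lemma pos_count (f : Polynomial ℂ) (hne : ∀ z, f.eval z = 0 → z.re ≠ 0) :
    Multiset.card (f.roots.filter fun z => 0 < z.re)
      = Multiset.card f.roots - Multiset.card (f.roots.filter fun z => z.re < 0) := by
  have h1 : f.roots.filter (fun z => 0 < z.re) = f.roots.filter (fun z => ¬ z.re < 0) := by
    apply Multiset.filter_congr
    intro z hz
    have hz0 : z.re ≠ 0 := hne z (mem_roots'.mp hz).2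
    rcases lt_or_gt_of_ne hz0 with h | h
    · simp [h, asymm h]
    · simp [h, asymm h]
  rw [h1]
  have h2 := Multiset.filter_add_not (fun z => z.re < 0) f.roots
  have hc := congrArg Multiset.card h2
  rw [Multiset.card_add] at hc
  omega


/-- **Stubborn Complex Roots Theorem (general form).**  Let `P` and `Q` be real
polynomials of degrees `n > m`.  All `m` roots of `Q` are real and positive; `P` has
at least `m` real roots (`k` real roots in total, counted with multiplicity, enumerated
in order of absolute value by `p : Fin k → ℝ`), and every non-real complex root of `P`
has `|Re| > |Im|`.  Suppose `|P(0)| > |Q(0)|` and that the `m` smallest (in absolute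
value) real roots of `P` satisfy `|p j| < |q j|` for `j = 1, …, m`, where
`q : Fin m → ℝ` enumerates the roots of `Q` ordered by absolute value.  Then `S = P + Q`
has the same number of roots (with multiplicity) with strictly negative (resp. strictly
positive) real part as `P`. -/
theorem stubborn_complex_roots (n m k : ℕ) (hnm : m < n) (P Q : Polynomial ℝ)
    (hP0 : P ≠ 0) (hQ0 : Q ≠ 0) (hPdeg : P.natDegree = n) (hQdeg : Q.natDegree = m)
    (hQsplit : (Q.map (RingHom.id ℝ)).Splits)
    (hk : Multiset.card P.roots = k) (hmk : m ≤ k)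
    (p : Fin k → ℝ) (q : Fin m → ℝ)
    (hproots : P.roots = ↑(List.ofFn p)) (hqroots : Q.roots = ↑(List.ofFn q))
    (hqpos : ∀ j, 0 < q j)
    (hcomplex : ∀ z : ℂ, (P.map (algebraMap ℝ ℂ)).eval z = 0 → z.im ≠ 0 →
      |z.im| < |z.re|)
    (h0 : |Q.eval 0| < |P.eval 0|)
    (hpmono : ∀ i j : Fin k, i ≤ j → |p i| ≤ |p j|)
    (hqmono : ∀ i j : Fin m, i ≤ j → |q i| ≤ |q j|)
    (hlt : ∀ j : Fin m, |p (Fin.castLE hmk j)| < |q j|) :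
    (Multiset.card
        ((((P + Q).map (algebraMap ℝ ℂ)).roots).filter fun z => z.re < 0) =
      Multiset.card (((P.map (algebraMap ℝ ℂ)).roots).filter fun z => z.re < 0)) ∧
    (Multiset.card
        ((((P + Q).map (algebraMap ℝ ℂ)).roots).filter fun z => 0 < z.re) =
      Multiset.card (((P.map (algebraMap ℝ ℂ)).roots).filter fun z => 0 < z.re)) := by
  have hn : 0 < n := Nat.lt_of_le_of_lt (Nat.zero_le m) hnm
  set Pc := P.map (algebraMap ℝ ℂ) with hPc_def
  set Qc := Q.map (algebraMap ℝ ℂ) with hQc_def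
  have hinj : Function.Injective (algebraMap ℝ ℂ) := (algebraMap ℝ ℂ).injective
  have hPcdeg : Pc.natDegree = n := by
    rw [hPc_def, natDegree_map_eq_of_injective hinj, hPdeg]
  have hQcdeg : Qc.natDegree < n := by
    rw [hQc_def, natDegree_map_eq_of_injective hinj, hQdeg]; exact hnm
  -- the key inequality
  have hkey := key_ineq m k P Q hP0 hQ0 hQsplit hmk p q hproots hqroots hqpos hcomplex h0 hlt
  -- no roots on the imaginary axis for the whole family
  have hax : ∀ s : ℝ, s ∈ Set.Icc (0:ℝ) 1 → ∀ z : ℂ,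
      (Pc + C (s:ℂ) * Qc).eval z = 0 → z.re ≠ 0 := by
    intro s hs z hz hre
    have hzeq : z = ((z.im : ℂ)) * I := by
      apply Complex.ext <;> simp [hre]
    have hPeval : Pc.eval z = -((s:ℂ) * Qc.eval z) := by
      rw [eval_add, eval_mul, eval_C] at hz
      linear_combination hz
    have habs : Complex.abs (Pc.eval z) ≤ Complex.abs (Qc.eval z) := by
      rw [hPeval, map_neg_eq_map, map_mul, Complex.abs_ofReal]
      have h1 : |s| ≤ 1 := by rw [abs_le]; exact ⟨by linarith [hs.1], hs.2⟩
      nlinarith [apply_nonneg Complex.abs (Qc.eval z)]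
    have := hkey z.im
    rw [← hzeq] at this
    linarith [habs, this]
  -- first component
  have hmapadd : (P + Q).map (algebraMap ℝ ℂ) = Pc + Qc := Polynomial.map_add _
  have hfirst : Multiset.card
      ((((P + Q).map (algebraMap ℝ ℂ)).roots).filter fun z => z.re < 0) =
      Multiset.card ((Pc.roots).filter fun z => z.re < 0) := by
    rw [hmapadd]
    exact count_const n hn Pc Qc hPcdeg hQcdeg hax
  refine ⟨hfirst, ?_⟩
  -- second component
  have haxP : ∀ z : ℂ, Pc.eval z = 0 → z.re ≠ 0 := by
    intro z hz
    apply hax 0 (by norm_num) z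
    simpa using hz
  have haxS : ∀ z : ℂ, (Pc + Qc).eval z = 0 → z.re ≠ 0 := by
    intro z hz
    apply hax 1 (by norm_num) z
    simpa using hz
  have hcardP : Multiset.card Pc.roots = n := by
    rw [← hPcdeg]
    exact splits_iff_card_roots.mp (IsAlgClosed.splits _)
  have hSdeg : (Pc + Qc).natDegree = n := by
    have hPc0 : Pc ≠ 0 := fun h => by simp [h] at hPcdeg; omega
    have hdlt : Qc.degree < Pc.degree := by
      calc Qc.degree ≤ (Qc.natDegree : WithBot ℕ) := degree_le_natDegree
        _ < (n : WithBot ℕ) := Nat.cast_lt.mpr hQcdeg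
        _ = Pc.degree := by rw [degree_eq_natDegree hPc0, hPcdeg]
    rw [← hPcdeg]
    exact natDegree_eq_of_degree_eq (degree_add_eq_left_of_degree_lt hdlt)
  have hcardS : Multiset.card (Pc + Qc).roots = n := by
    rw [← hSdeg]
    exact splits_iff_card_roots.mp (IsAlgClosed.splits _)
  rw [hmapadd, pos_count _ haxS, pos_count _ haxP, hcardS, hcardP, hmapadd] at *
  rw [hfirst]
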